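/- Any infinite set of points in the Euclidean plane with pairwise integral distances is contained in a line. -/

import Mathlib

open Polynomial in
lemma quad_root_finite (Qa Qb Qc : ℝ) (h : ¬ (Qa = 0 ∧ Qb = 0 ∧ Qc = 0)) :
    Set.Finite {r : ℝ | Qa * r ^ 2 + Qb * r + Qc = 0} := by
  have hf : (C Qa * X ^ 2 + C Qb * X + C Qc : ℝ[X]) ≠ 0 := by
    intro hf
    apply h
    refine ⟨?_, ?_, ?_⟩
    · have := congrArg (fun p => Polynomial.coeff p 2) hf
      simpa using this
    · have := congrArg (fun p => Polynomial.coeff p 1) hf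
      simpa using this
    · have := congrArg (fun p => Polynomial.coeff p 0) hf
      simpa using this
  have := Polynomial.finite_setOf_isRoot hf
  refine this.subset ?_
  intro r hr
  simp only [Set.mem_setOf_eq, Polynomial.IsRoot, Polynomial.eval_add, Polynomial.eval_mul,
    Polynomial.eval_pow, Polynomial.eval_C, Polynomial.eval_X]
  simp only [Set.mem_setOf_eq] at hr
  linarith

set_option maxHeartbeats 1000000 in
lemma core_finite (a1 a2 b1 b2 c1 c2 k l : ℝ)
    (hD : (a1 - b1) * (a2 - c2) - (a2 - b2) * (a1 - c1) ≠ 0) :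
    Set.Finite {x : ℝ × ℝ | ∃ r : ℝ,
      (x.1 - a1) ^ 2 + (x.2 - a2) ^ 2 = r ^ 2 ∧
      (x.1 - b1) ^ 2 + (x.2 - b2) ^ 2 = (r - k) ^ 2 ∧
      (x.1 - c1) ^ 2 + (x.2 - c2) ^ 2 = (r - l) ^ 2} := by
  set p1 := a1 - b1 with hp1
  set p2 := a2 - b2 with hp2
  set q1 := a1 - c1 with hq1
  set q2 := a2 - c2 with hq2
  set cB := b1 ^ 2 + b2 ^ 2 - a1 ^ 2 - a2 ^ 2 with hcB
  set cC := c1 ^ 2 + c2 ^ 2 - a1 ^ 2 - a2 ^ 2 with hcC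
  set D := p1 * q2 - p2 * q1 with hDdef
  set α := (l * p2 - k * q2) / D with hα
  set β := (q2 * (k ^ 2 - cB) - p2 * (l ^ 2 - cC)) / (2 * D) with hβ
  set γ := (k * q1 - l * p1) / D with hγ
  set δ := (p1 * (l ^ 2 - cC) - q1 * (k ^ 2 - cB)) / (2 * D) with hδ
  by_cases hz : (α ^ 2 + γ ^ 2 - 1) = 0 ∧ (2 * (α * (β - a1) + γ * (δ - a2))) = 0 ∧
      ((β - a1) ^ 2 + (δ - a2) ^ 2) = 0
  · -- degenerate case: impossible since D ≠ 0
    exfalso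
    obtain ⟨hz1, hz2, hz3⟩ := hz
    have hsq := (add_eq_zero_iff_of_nonneg (sq_nonneg (β - a1)) (sq_nonneg (δ - a2))).mp hz3
    have hb : β = a1 := by
      have := pow_eq_zero_iff two_ne_zero |>.mp hsq.1; linarith
    have hd : δ = a2 := by
      have := pow_eq_zero_iff two_ne_zero |>.mp hsq.2; linarith
    have hzα : α ^ 2 + γ ^ 2 = 1 := by linarith
    have I1 : α * p1 + γ * p2 = -k := by
      rw [hα, hγ]; field_simp [hD]; linear_combination (-k) * hDdef
    have I3 : α * q1 + γ * q2 = -l := by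
      rw [hα, hγ]; field_simp [hD]; linear_combination (-l) * hDdef
    have I2 : 2 * (β * p1 + δ * p2) = k ^ 2 - cB := by
      rw [hβ, hδ]; field_simp [hD]; linear_combination (k ^ 2 - cB) * hDdef
    have I4 : 2 * (β * q1 + δ * q2) = l ^ 2 - cC := by
      rw [hβ, hδ]; field_simp [hD]; linear_combination (l ^ 2 - cC) * hDdef
    have hk2 : p1 ^ 2 + p2 ^ 2 = k ^ 2 := by
      rw [hb, hd, hcB, hp1, hp2] at I2
      rw [hp1, hp2]
      linear_combination I2
    have hl2 : q1 ^ 2 + q2 ^ 2 = l ^ 2 := by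
      rw [hb, hd, hcC, hq1, hq2] at I4
      rw [hq1, hq2]
      linear_combination I4
    have hcsP : p1 * γ - p2 * α = 0 := by
      have h2 : (p1 * γ - p2 * α) ^ 2 = 0 := by
        linear_combination (α ^ 2 + γ ^ 2) * hk2 + k ^ 2 * hzα - (p1 * α + p2 * γ - k) * I1
      exact pow_eq_zero_iff two_ne_zero |>.mp h2
    have hcsQ : q1 * γ - q2 * α = 0 := by
      have h2 : (q1 * γ - q2 * α) ^ 2 = 0 := by
        linear_combination (α ^ 2 + γ ^ 2) * hl2 + l ^ 2 * hzα - (q1 * α + q2 * γ - l) * I3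
      exact pow_eq_zero_iff two_ne_zero |>.mp h2
    apply hD
    rw [hDdef]
    linear_combination (α * q1 + γ * q2) * hcsP - (α * p1 + γ * p2) * hcsQ -
      (p1 * q2 - p2 * q1) * hzα
  · -- nondegenerate case: r satisfies a nontrivial quadratic and determines x
    apply Set.Finite.subset
      (((quad_root_finite _ _ _ hz).image (fun r => ((α * r + β, γ * r + δ) : ℝ × ℝ))))
    rintro x ⟨r, h1, h2, h3⟩
    have L1 : 2 * x.1 * p1 + 2 * x.2 * p2 = -2 * k * r + k ^ 2 - cB := by
      rw [hp1, hp2, hcB]; linear_combination h2 - h1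
    have L2 : 2 * x.1 * q1 + 2 * x.2 * q2 = -2 * l * r + l ^ 2 - cC := by
      rw [hq1, hq2, hcC]; linear_combination h3 - h1
    have hxre : x.1 = α * r + β := by
      rw [hα, hβ]
      field_simp [hD]
      linear_combination q2 * L1 - p2 * L2 + 2 * x.1 * hDdef
    have hxim : x.2 = γ * r + δ := by
      rw [hγ, hδ]
      field_simp [hD]
      linear_combination p1 * L2 - q1 * L1 + 2 * x.2 * hDdef
    have hquad : (α ^ 2 + γ ^ 2 - 1) * r ^ 2 + 2 * (α * (β - a1) + γ * (δ - a2)) * r +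
        ((β - a1) ^ 2 + (δ - a2) ^ 2) = 0 := by
      rw [hxre, hxim] at h1
      linear_combination h1
    exact ⟨r, hquad, by rw [Prod.ext_iff]; exact ⟨hxre.symm, hxim.symm⟩⟩

lemma dist_sq_complex (z w : ℂ) :
    dist z w ^ 2 = (z.re - w.re) ^ 2 + (z.im - w.im) ^ 2 := by
  rw [Complex.dist_eq, Complex.sq_norm, Complex.normSq_apply, Complex.sub_re, Complex.sub_im]
  ring

lemma collinear_of_det (A B C : ℂ)
    (h : (A.re - B.re) * (A.im - C.im) - (A.im - B.im) * (A.re - C.re) = 0) :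
    Collinear ℝ ({A, B, C} : Set ℂ) := by
  rw [collinear_iff_of_mem (Set.mem_insert A {B, C})]
  by_cases hCA : C = A
  · refine ⟨B - A, fun p hp => ?_⟩
    rcases hp with rfl | rfl | rfl
    · exact ⟨0, by simp⟩
    · exact ⟨1, by simp [vadd_eq_add]⟩
    · exact ⟨0, by simp [hCA]⟩
  · have hw : (C.re - A.re) ^ 2 + (C.im - A.im) ^ 2 ≠ 0 := by
      intro h0
      have h1 := (add_eq_zero_iff_of_nonneg (sq_nonneg (C.re - A.re)) (sq_nonneg (C.im - A.im))).mp h0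
      have h2 := pow_eq_zero_iff two_ne_zero |>.mp h1.1
      have h3 := pow_eq_zero_iff two_ne_zero |>.mp h1.2
      exact hCA (Complex.ext (by linarith) (by linarith))
    refine ⟨C - A, fun p hp => ?_⟩
    rcases hp with rfl | rfl | rfl
    · exact ⟨0, by simp⟩
    · refine ⟨((p.re - A.re) * (C.re - A.re) + (p.im - A.im) * (C.im - A.im)) /
        ((C.re - A.re) ^ 2 + (C.im - A.im) ^ 2), ?_⟩
      apply Complex.ext
      · simp only [vadd_eq_add, Complex.add_re, Complex.smul_re, Complex.sub_re, smul_eq_mul]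
        field_simp
        linear_combination (C.im - A.im) * h
      · simp only [vadd_eq_add, Complex.add_im, Complex.smul_im, Complex.sub_im, smul_eq_mul]
        field_simp
        linear_combination (A.re - C.re) * h
    · exact ⟨1, by simp [vadd_eq_add]⟩

lemma fiber_finite (A B C : ℂ) (h : ¬ Collinear ℝ ({A, B, C} : Set ℂ)) (k l : ℝ) :
    Set.Finite {x : ℂ | dist x A - dist x B = k ∧ dist x A - dist x C = l} := by
  have hD : (A.re - B.re) * (A.im - C.im) - (A.im - B.im) * (A.re - C.re) ≠ 0 :=
    fun h0 => h (collinear_of_det A B C h0)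
  have hcore := core_finite A.re A.im B.re B.im C.re C.im k l hD
  have hinj : Function.Injective (fun z : ℂ => ((z.re, z.im) : ℝ × ℝ)) := fun a b hab =>
    Complex.ext (congrArg Prod.fst hab) (congrArg Prod.snd hab)
  refine Set.Finite.subset (Set.Finite.preimage (hinj.injOn) hcore) ?_
  rintro x ⟨h1, h2⟩
  refine ⟨dist x A, (dist_sq_complex x A).symm, ?_, ?_⟩
  · have hB : dist x A - k = dist x B := by linarith
    rw [hB]
    exact (dist_sq_complex x B).symm
  · have hC : dist x A - l = dist x C := by linarith
    rw [hC]
    exact (dist_sq_complex x C).symm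

theorem erdos_anning_plane (P : Set ℂ) (hinf : P.Infinite)
    (hint : ∀ p ∈ P, ∀ q ∈ P, ∃ n : ℤ, dist p q = n) :
    Collinear ℝ P := by
  by_contra hcol
  obtain ⟨A, hA, B, hB, hAB⟩ := hinf.nontrivial
  have hexC : ∃ C ∈ P, ¬ Collinear ℝ ({A, B, C} : Set ℂ) := by
    by_contra hC
    push_neg at hC
    apply hcol
    rw [collinear_iff_of_mem hA]
    refine ⟨B - A, fun p hp => ?_⟩
    have hcl := hC p hp
    have hmem : p ∈ line[ℝ, A, B] :=
      hcl.mem_affineSpan_of_mem_of_ne (Set.mem_insert _ _)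
        (Set.mem_insert_of_mem _ (Set.mem_insert _ _))
        (Set.mem_insert_of_mem _ (Set.mem_insert_of_mem _ rfl)) hAB
    have hmem' : (p - A) +ᵥ A ∈ line[ℝ, A, B] := by
      simpa [vadd_eq_add, sub_add_cancel] using hmem
    obtain ⟨r, hr⟩ := vadd_left_mem_affineSpan_pair.mp hmem'
    refine ⟨r, ?_⟩
    rw [vadd_eq_add] at *
    rw [vsub_eq_sub] at hr
    linear_combination -hr
  obtain ⟨C, hCmem, hABC⟩ := hexC
  obtain ⟨nB, hnB⟩ := hint A hA B hB
  obtain ⟨nC, hnC⟩ := hint A hA C hCmem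
  have hfin : Set.Finite (⋃ z ∈ (Finset.Icc (-nB) nB ×ˢ Finset.Icc (-nC) nC : Finset (ℤ × ℤ)),
      {x : ℂ | dist x A - dist x B = (z.1 : ℝ) ∧ dist x A - dist x C = (z.2 : ℝ)}) :=
    Set.Finite.biUnion (Finset.finite_toSet _) (fun z _ => fiber_finite A B C hABC z.1 z.2)
  apply hinf
  refine hfin.subset ?_
  intro p hp
  obtain ⟨m, hm⟩ := hint p hp A hA
  obtain ⟨n, hn⟩ := hint p hp B hB
  obtain ⟨o, ho⟩ := hint p hp C hCmem
  have hbB : |dist p A - dist p B| ≤ dist A B := by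
    rw [dist_comm p A, dist_comm p B]
    exact abs_dist_sub_le A B p
  have hbC : |dist p A - dist p C| ≤ dist A C := by
    rw [dist_comm p A, dist_comm p C]
    exact abs_dist_sub_le A C p
  rw [hm, hn, hnB] at hbB
  rw [hm, ho, hnC] at hbC
  have hkB : -nB ≤ m - n ∧ m - n ≤ nB := by
    have : |(m : ℝ) - n| ≤ (nB : ℝ) := hbB
    rw [abs_le] at this
    constructor <;> [exact_mod_cast this.1; exact_mod_cast this.2]
  have hkC : -nC ≤ m - o ∧ m - o ≤ nC := by
    have : |(m : ℝ) - o| ≤ (nC : ℝ) := hbC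
    rw [abs_le] at this
    constructor <;> [exact_mod_cast this.1; exact_mod_cast this.2]
  have hidx : ((m - n, m - o) : ℤ × ℤ) ∈
      ((Finset.Icc (-nB) nB ×ˢ Finset.Icc (-nC) nC : Finset (ℤ × ℤ)) : Set (ℤ × ℤ)) := by
    simp only [Finset.coe_product, Set.mem_prod, Finset.mem_coe, Finset.mem_Icc]
    exact ⟨⟨hkB.1, hkB.2⟩, ⟨hkC.1, hkC.2⟩⟩
  refine Set.mem_biUnion hidx ?_
  constructor
  · rw [hm, hn]; push_cast; ring
  · rw [hm, ho]; push_cast; ring
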